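/- For a countable group G, the following are equivalent: (1) every finitely generated subgroup of G has subexponential growth; (2) there exists a moderate ℓ¹-function on G (with the left translation action); (3) every countable G-set admits a moderate ℓ¹-function. -/

import Mathlib

open Filter

/-- The word ball of radius `n` in `G` with respect to `S`. -/
def wordBall {G : Type*} [Group G] (S : Finset G) (n : ℕ) : Set G :=
  {g | ∃ l : List G, l.length ≤ n ∧ (∀ s ∈ l, s ∈ S) ∧ l.prod = g}

/-- `ν` is a moderate `ℓ¹`-function on the `G`-set `X`. -/
def IsModerateL1 (G : Type) [Group G] (X : Type) [MulAction G X] (ν : X → ℝ) : Prop :=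
  Summable ν ∧ (∀ x, 0 < ν x) ∧
    ∀ g : G, Tendsto (fun x : X => ν (g • x) / ν x) cofinite (nhds 1)

namespace ML1
variable {G : Type*} [Group G]

lemma one_mem_wordBall (S : Finset G) (n : ℕ) : (1 : G) ∈ wordBall S n :=
  ⟨[], by simp⟩

lemma wordBall_mono (S : Finset G) {m n : ℕ} (h : m ≤ n) : wordBall S m ⊆ wordBall S n := by
  rintro g ⟨l, hl, hs, hp⟩
  exact ⟨l, hl.trans h, hs, hp⟩

lemma wordBall_subset (S T : Finset G) (hST : S ⊆ T) (n : ℕ) :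
    wordBall S n ⊆ wordBall T n := by
  rintro g ⟨l, hl, hs, hp⟩
  exact ⟨l, hl, fun s hs' => hST (hs s hs'), hp⟩

lemma mul_mem_wordBall {S : Finset G} {s g : G} {n : ℕ} (hs : s ∈ S)
    (hg : g ∈ wordBall S n) : s * g ∈ wordBall S (n + 1) := by
  obtain ⟨l, hl, hmem, hp⟩ := hg
  refine ⟨s :: l, by simpa using hl, ?_, by simp [hp]⟩
  intro t ht
  rcases List.mem_cons.1 ht with h | h
  · exact h ▸ hs
  · exact hmem t h

lemma wordBall_succ_subset (S : Finset G) (n : ℕ) :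
    wordBall S (n + 1) ⊆ {1} ∪ ⋃ s ∈ S, (fun g => s * g) '' wordBall S n := by
  rintro g ⟨l, hl, hmem, hp⟩
  cases l with
  | nil => left; simp [← hp]
  | cons t l' =>
      right
      refine Set.mem_biUnion (hmem t (by simp)) ?_
      exact ⟨l'.prod, ⟨l', by simpa using hl, fun s hs => hmem s (by simp [hs]), rfl⟩,
        by simp [← hp]⟩

lemma wordBall_finite (S : Finset G) (n : ℕ) : (wordBall S n).Finite := by
  induction n with
  | zero =>
      refine Set.Finite.subset (Set.finite_singleton 1) ?_
      rintro g ⟨l, hl, -, hp⟩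
      have : l = [] := List.length_eq_zero_iff.1 (Nat.le_zero.1 hl)
      simp [this] at hp
      simp [← hp]
  | succ n ih =>
      refine Set.Finite.subset ?_ (wordBall_succ_subset S n)
      exact (Set.finite_singleton 1).union
        (S.finite_toSet.biUnion fun s _ => ih.image _)

lemma natCard_wordBall (S : Finset G) (n : ℕ) :
    (Nat.card (wordBall S n) : ℝ) = ((wordBall_finite S n).toFinset.card : ℝ) := by
  rw [Nat.card_coe_set_eq, Set.ncard_eq_toFinset_card _ (wordBall_finite S n)]

lemma one_le_natCard_wordBall (S : Finset G) (n : ℕ) :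
    (1 : ℝ) ≤ (Nat.card (wordBall S n) : ℝ) := by
  haveI := (wordBall_finite S n).to_subtype
  haveI : Nonempty (wordBall S n) := ⟨1, one_mem_wordBall S n⟩
  exact_mod_cast Nat.card_pos

/-- From subexponential growth, geometric-weighted ball sizes are summable. -/
lemma summable_card_mul_pow (S : Finset G)
    (hS : Tendsto (fun n : ℕ => (Nat.card (wordBall S n) : ℝ) ^ (1 / (n : ℝ))) atTop (nhds 1))
    {r : ℝ} (hr0 : 0 < r) (hr1 : r < 1) :
    Summable (fun n : ℕ => (Nat.card (wordBall S n) : ℝ) * r ^ n) := by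
  set t := Real.sqrt r with ht
  have ht0 : 0 < t := Real.sqrt_pos.2 hr0
  have ht1 : t < 1 := by
    rw [ht, show (1:ℝ) = Real.sqrt 1 by simp]
    exact Real.sqrt_lt_sqrt hr0.le hr1
  have htt : t * t = r := Real.mul_self_sqrt hr0.le
  have h1t : 1 < 1 / t := by rw [lt_div_iff₀ ht0]; simpa using ht1
  obtain ⟨N, hN⟩ := Filter.eventually_atTop.1 (hS.eventually_lt_const h1t)
  set M := max N 1 with hM
  apply (summable_nat_add_iff M).1
  have hsum : Summable (fun n : ℕ => t ^ (n + M)) :=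
    (summable_nat_add_iff M).2 (summable_geometric_of_lt_one ht0.le ht1)
  refine Summable.of_nonneg_of_le (fun n => ?_) (fun n => ?_) hsum
  · positivity
  · set m := n + M with hm
    have hm1 : m ≠ 0 := by
      have : 1 ≤ m := le_trans (le_max_right N 1) (Nat.le_add_left M n)
      omega
    have hmN : N ≤ m := le_trans (le_max_left N 1) (Nat.le_add_left M n)
    have hc := hN m hmN
    have hcard0 : (0:ℝ) ≤ (Nat.card (wordBall S m) : ℝ) := Nat.cast_nonneg _
    have hcard : (Nat.card (wordBall S m) : ℝ) ≤ (1 / t) ^ m := by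
      have h2 := pow_le_pow_left₀ (Real.rpow_nonneg hcard0 _) hc.le m
      rwa [one_div (m:ℝ), Real.rpow_inv_natCast_pow hcard0 hm1] at h2
    calc (Nat.card (wordBall S m) : ℝ) * r ^ m ≤ (1/t)^m * r ^ m := by
          apply mul_le_mul_of_nonneg_right hcard (by positivity)
      _ = t ^ m := by
          rw [← mul_pow]
          congr 1
          field_simp
          linear_combination (-1 : ℝ) * htt
  
/-- Uniform positive lower bound on a finite set. -/
lemma exists_pos_lb {α : Type*} {s : Set α} (hs : s.Finite) (f : α → ℝ)
    (hf : ∀ x ∈ s, 0 < f x) : ∃ c, 0 < c ∧ ∀ x ∈ s, c ≤ f x := by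
  rcases s.eq_empty_or_nonempty with h | h
  · exact ⟨1, one_pos, by simp [h]⟩
  · classical
    set F := hs.toFinset with hF
    have hFne : (F.image f).Nonempty := by
      obtain ⟨x, hx⟩ := h
      exact ⟨f x, Finset.mem_image_of_mem f (hs.mem_toFinset.2 hx)⟩
    refine ⟨(F.image f).min' hFne, ?_, ?_⟩
    · obtain ⟨x, hx, hfx⟩ := Finset.mem_image.1 ((F.image f).min'_mem hFne)
      exact hfx ▸ hf x (hs.mem_toFinset.1 hx)
    · intro x hx
      exact Finset.min'_le _ _ (Finset.mem_image_of_mem f (hs.mem_toFinset.2 hx))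

end ML1
section AofB
variable {G : Type} [Group G]

lemma A_of_B (hB : ∃ ν : G → ℝ, IsModerateL1 G G ν) (S : Finset G) :
    Tendsto (fun n : ℕ => (Nat.card (wordBall S n) : ℝ) ^ (1 / (n : ℝ))) atTop (nhds 1) := by
  classical
  obtain ⟨ν, hsum, hpos, hmod⟩ := hB
  rw [Metric.tendsto_atTop]
  intro ε hε
  set ρ : ℝ := (1 + ε / 2)⁻¹ with hρdef
  have h1ε : (1:ℝ) < 1 + ε / 2 := by linarith
  have hρ0 : 0 < ρ := by positivity
  have hρ1 : ρ < 1 := by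
    rw [hρdef, inv_lt_one_iff₀]; right; exact h1ε
  have hρinv : ρ⁻¹ = 1 + ε / 2 := by rw [hρdef, inv_inv]
  -- bad sets are finite
  have hfin : ∀ s : G, {x : G | ν (s • x) < ρ * ν x}.Finite := by
    intro s
    have hev := Filter.eventually_cofinite.1 (((hmod s).eventually_const_lt hρ1))
    refine hev.subset ?_
    intro x hx
    simp only [Set.mem_setOf_eq] at hx ⊢
    intro hcon
    rw [lt_div_iff₀ (hpos x)] at hcon
    exact absurd hx (not_lt.2 (le_of_lt hcon))
  set F : Set G := ⋃ s ∈ S, {x : G | ν (s • x) < ρ * ν x} with hFdef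
  have hF : F.Finite := Set.Finite.biUnion S.finite_toSet fun s _ => hfin s
  set E : Set G := insert 1 (F ∪ ⋃ s ∈ S, (fun x => s * x) '' F) with hEdef
  have hE : E.Finite := by
    apply Set.Finite.insert
    exact hF.union (Set.Finite.biUnion S.finite_toSet fun s _ => hF.image _)
  obtain ⟨c, hc0, hcle⟩ := ML1.exists_pos_lb hE ν (fun x _ => hpos x)
  have hc1 : c ≤ ν 1 := hcle 1 (Set.mem_insert _ _)
  -- key lower bound on balls
  have key : ∀ n : ℕ, ∀ g ∈ wordBall S n, c * ρ ^ n ≤ ν g := by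
    intro n
    induction n with
    | zero =>
        rintro g ⟨l, hl, -, hp⟩
        have : l = [] := List.length_eq_zero_iff.1 (Nat.le_zero.1 hl)
        subst this
        simp only [List.prod_nil] at hp
        rw [← hp]
        simpa using hc1
    | succ n ih =>
        rintro g ⟨l, hl, hmem, hp⟩
        have hpow : ρ ^ (n+1) ≤ 1 := pow_le_one₀ hρ0.le hρ1.le
        cases l with
        | nil =>
            simp only [List.prod_nil] at hp
            rw [← hp]
            calc c * ρ ^ (n+1) ≤ c * 1 := by
                  exact mul_le_mul_of_nonneg_left hpow hc0.le
              _ = c := mul_one c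
              _ ≤ ν 1 := hc1
        | cons t l' =>
            have ht : t ∈ S := hmem t (by simp)
            have hx : l'.prod ∈ wordBall S n :=
              ⟨l', by simpa using hl, fun s hs => hmem s (by simp [hs]), rfl⟩
            rw [← hp]
            simp only [List.prod_cons]
            by_cases hxF : l'.prod ∈ F
            · have hgE : t * l'.prod ∈ E := by
                rw [hEdef]
                right
                right
                exact Set.mem_biUnion ht ⟨l'.prod, hxF, rfl⟩
              calc c * ρ ^ (n+1) ≤ c * 1 := mul_le_mul_of_nonneg_left hpow hc0.le
                _ = c := mul_one c
                _ ≤ ν (t * l'.prod) := hcle _ hgE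
            · have hnlt : ¬ ν (t • l'.prod) < ρ * ν l'.prod := by
                intro hcon
                exact hxF (Set.mem_biUnion ht hcon)
              rw [smul_eq_mul] at hnlt
              calc c * ρ ^ (n+1) = ρ * (c * ρ ^ n) := by ring
                _ ≤ ρ * ν l'.prod :=
                    mul_le_mul_of_nonneg_left (ih _ hx) hρ0.le
                _ ≤ ν (t * l'.prod) := not_lt.1 hnlt
  -- counting bound
  set T := ∑' x, ν x with hT
  have hT0 : 0 < T := lt_of_lt_of_le (hpos 1) (Summable.le_tsum hsum 1 fun j _ => (hpos j).le)
  have count : ∀ n : ℕ, (Nat.card (wordBall S n) : ℝ) * (c * ρ ^ n) ≤ T := by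
    intro n
    set Bf := (ML1.wordBall_finite S n).toFinset with hBf
    have h1 : Bf.card • (c * ρ ^ n) ≤ ∑ g ∈ Bf, ν g :=
      Finset.card_nsmul_le_sum _ _ _
        (fun g hg => key n g ((Set.Finite.mem_toFinset _).1 hg))
    have h2 : ∑ g ∈ Bf, ν g ≤ T := Summable.sum_le_tsum _ (fun i _ => (hpos i).le) hsum
    rw [ML1.natCard_wordBall]
    calc ((Bf.card : ℝ)) * (c * ρ ^ n) = Bf.card • (c * ρ ^ n) := by
          rw [nsmul_eq_mul]
      _ ≤ T := h1.trans h2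
  -- upper bound a n ≤ R * (ρ⁻¹)^n
  set R := T / c with hR
  have hR0 : 0 < R := div_pos hT0 hc0
  have haR : ∀ n : ℕ, (Nat.card (wordBall S n) : ℝ) ≤ R * (ρ⁻¹) ^ n := by
    intro n
    have h := count n
    rw [show (Nat.card (wordBall S n) : ℝ) * (c * ρ ^ n)
        = ((Nat.card (wordBall S n) : ℝ) * c) * ρ ^ n by ring] at h
    have h2 : (Nat.card (wordBall S n) : ℝ) * c ≤ T / ρ ^ n := by
      rw [le_div_iff₀ (by positivity)]
      exact h
    have h3 : (Nat.card (wordBall S n) : ℝ) ≤ T / ρ ^ n / c := by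
      rw [le_div_iff₀ hc0]
      exact h2
    calc (Nat.card (wordBall S n) : ℝ) ≤ T / ρ ^ n / c := h3
      _ = R * (ρ⁻¹) ^ n := by
          rw [hR]
          field_simp
          rw [← mul_pow, mul_one_div_cancel hρ0.ne', one_pow]
  -- R ^ (1/n) tends to 1
  have hRlim : Tendsto (fun n : ℕ => R ^ (1 / (n : ℝ))) atTop (nhds 1) := by
    have h1 : Tendsto (fun n : ℕ => Real.log R * (1 / (n : ℝ))) atTop (nhds 0) := by
      have := tendsto_one_div_atTop_nhds_zero_nat.const_mul (Real.log R)
      simpa using this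
    have h2 := Real.tendsto_exp_nhds_zero_nhds_one.comp h1
    refine h2.congr fun n => ?_
    rw [Function.comp_apply, ← Real.rpow_def_of_pos hR0]
  have hfrac : (1:ℝ) < (1 + ε) / (1 + ε / 2) := by
    rw [lt_div_iff₀ (by linarith)]
    linarith
  obtain ⟨N₀, hN₀⟩ := Filter.eventually_atTop.1 (hRlim.eventually_lt_const hfrac)
  refine ⟨max N₀ 1, fun n hn => ?_⟩
  have hn1 : 1 ≤ n := le_trans (le_max_right N₀ 1) hn
  have hnN : N₀ ≤ n := le_trans (le_max_left N₀ 1) hn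
  have hn0 : (n:ℝ) ≠ 0 := Nat.cast_ne_zero.2 (by omega)
  have hinvn : (0:ℝ) ≤ 1 / (n:ℝ) := by positivity
  set a := (Nat.card (wordBall S n) : ℝ) with ha
  have hlow : 1 ≤ a ^ (1 / (n:ℝ)) :=
    Real.one_le_rpow (ML1.one_le_natCard_wordBall S n) hinvn
  have hup : a ^ (1 / (n:ℝ)) < 1 + ε := by
    have h1 : a ^ (1 / (n:ℝ)) ≤ (R * (ρ⁻¹) ^ n) ^ (1 / (n:ℝ)) :=
      Real.rpow_le_rpow (by positivity) (haR n) hinvn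
    have h2 : ((ρ⁻¹ : ℝ) ^ n) ^ (1 / (n:ℝ)) = ρ⁻¹ := by
      rw [one_div, Real.pow_rpow_inv_natCast (by positivity) (by omega)]
    have h3 : (R * (ρ⁻¹) ^ n) ^ (1 / (n:ℝ)) = R ^ (1 / (n:ℝ)) * ρ⁻¹ := by
      rw [Real.mul_rpow hR0.le (by positivity), h2]
    have h4 : R ^ (1 / (n:ℝ)) < (1 + ε) / (1 + ε / 2) := hN₀ n hnN
    calc a ^ (1 / (n:ℝ)) ≤ R ^ (1 / (n:ℝ)) * ρ⁻¹ := by rw [← h3]; exact h1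
      _ < ((1 + ε) / (1 + ε / 2)) * ρ⁻¹ := by
          apply mul_lt_mul_of_pos_right h4 (by positivity)
      _ = 1 + ε := by
          rw [hρinv]
          field_simp
  rw [Real.dist_eq, abs_sub_lt_iff]
  constructor
  · linarith
  · linarith

end AofB
namespace ML1
open scoped Classical

variable {G : Type} [Group G]

/-- An increasing family of symmetric finite generating sets. -/
noncomputable def Sgen (enum : ℕ → G) (i : ℕ) : Finset G :=
  ({1} : Finset G) ∪ (Finset.range (i+1)).image enum ∪
    (Finset.range (i+1)).image (fun n => (enum n)⁻¹)

lemma one_mem_Sgen (enum : ℕ → G) (i : ℕ) : (1:G) ∈ Sgen enum i := by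
  simp [Sgen]

lemma enum_mem_Sgen (enum : ℕ → G) {j i : ℕ} (h : j ≤ i) : enum j ∈ Sgen enum i := by
  simp only [Sgen, Finset.mem_union, Finset.mem_image, Finset.mem_range]
  exact Or.inl (Or.inr ⟨j, by omega, rfl⟩)

lemma Sgen_symm (enum : ℕ → G) (i : ℕ) {s : G} (hs : s ∈ Sgen enum i) :
    s⁻¹ ∈ Sgen enum i := by
  simp only [Sgen, Finset.mem_union, Finset.mem_image, Finset.mem_range,
    Finset.mem_singleton] at hs ⊢
  rcases hs with (h1 | ⟨n, hn, rfl⟩) | ⟨n, hn, rfl⟩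
  · subst h1; left; left; simp
  · right; exact ⟨n, hn, rfl⟩
  · left; right; exact ⟨n, hn, by simp⟩

lemma Sgen_mono (enum : ℕ → G) {i j : ℕ} (h : i ≤ j) : Sgen enum i ⊆ Sgen enum j := by
  intro s hs
  simp only [Sgen, Finset.mem_union, Finset.mem_image, Finset.mem_range] at hs ⊢
  rcases hs with (h1 | ⟨n, hn, rfl⟩) | ⟨n, hn, rfl⟩
  · exact Or.inl (Or.inl h1)
  · exact Or.inl (Or.inr ⟨n, by omega, rfl⟩)
  · exact Or.inr ⟨n, by omega, rfl⟩

/-- The geometric ratios `rr i = (i+1)/(i+2)`, increasing to `1`. -/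
noncomputable def rr (i : ℕ) : ℝ := (i+1)/(i+2)

lemma rr_pos (i : ℕ) : 0 < rr i := by
  unfold rr; positivity

lemma rr_lt_one (i : ℕ) : rr i < 1 := by
  unfold rr
  rw [div_lt_one (by positivity)]
  linarith

lemma rr_mono {i j : ℕ} (h : i ≤ j) : rr i ≤ rr j := by
  unfold rr
  rw [div_le_div_iff₀ (by positivity) (by positivity)]
  have : (i:ℝ) ≤ (j:ℝ) := Nat.cast_le.2 h
  nlinarith

lemma rr_lt {i j : ℕ} (h : i < j) : rr i < rr j := by
  unfold rr
  rw [div_lt_div_iff₀ (by positivity) (by positivity)]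
  have : (i:ℝ) + 1 ≤ (j:ℝ) := by exact_mod_cast Nat.succ_le_of_lt h
  nlinarith

lemma exists_rr_ge {δ : ℝ} (hδ : 0 < δ) : ∃ K : ℕ, ∀ i, K ≤ i → 1 - δ ≤ rr i := by
  obtain ⟨K, hK⟩ := exists_nat_ge (1/δ)
  refine ⟨K, fun i hi => ?_⟩
  have h1 : (1:ℝ)/δ ≤ i := le_trans hK (Nat.cast_le.2 hi)
  have h2 : (1:ℝ)/((i:ℝ)+2) ≤ δ := by
    rw [div_le_iff₀ (by positivity)]
    rw [div_le_iff₀ hδ] at h1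
    nlinarith
  have h3 : rr i = 1 - 1/((i:ℝ)+2) := by
    unfold rr
    field_simp
    ring
  rw [h3]
  linarith

/-- Reachability from the identity by words in `Sgen enum i`. -/
def HP (enum : ℕ → G) (i : ℕ) (g : G) : Prop := ∃ n, g ∈ wordBall (Sgen enum i) n

lemma HP_one (enum : ℕ → G) (i : ℕ) : HP enum i 1 := ⟨0, one_mem_wordBall _ 0⟩

/-- The basic weight `phi enum i g = rr i ^ |g|`. -/
noncomputable def phi (enum : ℕ → G) (i : ℕ) (g : G) : ℝ :=
  if h : HP enum i g then rr i ^ (Nat.find h) else 0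

lemma phi_nonneg (enum : ℕ → G) (i : ℕ) (g : G) : 0 ≤ phi enum i g := by
  unfold phi
  split
  · exact (pow_pos (rr_pos i) _).le
  · exact le_refl 0

lemma phi_pos (enum : ℕ → G) (i : ℕ) {g : G} (h : HP enum i g) : 0 < phi enum i g := by
  unfold phi
  rw [dif_pos h]
  exact pow_pos (rr_pos i) _

lemma phi_le_one (enum : ℕ → G) (i : ℕ) (g : G) : phi enum i g ≤ 1 := by
  unfold phi
  split
  · exact pow_le_one₀ (rr_pos i).le (rr_lt_one i).le
  · exact zero_le_one

lemma HP_mul {enum : ℕ → G} {i : ℕ} {s g : G} (hs : s ∈ Sgen enum i)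
    (h : HP enum i g) : HP enum i (s * g) := by
  obtain ⟨n, hn⟩ := h
  exact ⟨n + 1, mul_mem_wordBall hs hn⟩

lemma phi_mul_ge (enum : ℕ → G) (i : ℕ) {s : G} (hs : s ∈ Sgen enum i) (g : G) :
    rr i * phi enum i g ≤ phi enum i (s * g) := by
  by_cases h : HP enum i g
  · have h2 : HP enum i (s * g) := HP_mul hs h
    unfold phi
    rw [dif_pos h, dif_pos h2]
    have hfind : Nat.find h2 ≤ Nat.find h + 1 := by
      apply Nat.find_le
      exact mul_mem_wordBall hs (Nat.find_spec h)
    calc rr i * rr i ^ (Nat.find h) = rr i ^ (Nat.find h + 1) := by ring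
      _ ≤ rr i ^ (Nat.find h2) :=
        pow_le_pow_of_le_one (rr_pos i).le (rr_lt_one i).le hfind
  · have h2 : ¬ HP enum i (s * g) := by
      intro hcon
      apply h
      have := HP_mul (Sgen_symm enum i hs) hcon
      simpa using this
    unfold phi
    rw [dif_neg h, dif_neg h2]
    simp

lemma HP_mono {enum : ℕ → G} {i K : ℕ} (h : i ≤ K) {g : G} (hg : HP enum i g) :
    HP enum K g := by
  obtain ⟨n, hn⟩ := hg
  exact ⟨n, wordBall_subset _ _ (Sgen_mono enum h) n hn⟩

/-- Key head-versus-tail estimate at the level of `phi`. -/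
lemma phi_head_le (enum : ℕ → G) {i K : ℕ} (hiK : i ≤ K) {N : ℕ} {n : ℕ} {g : G}
    (hgood : ¬(n < N ∧ g ∈ wordBall (Sgen enum K) N)) :
    rr i ^ n * phi enum i g ≤ (rr i / rr K)^N * (rr K ^ n * phi enum K g) := by
  by_cases h : HP enum i g
  · have hK : HP enum K g := HP_mono hiK h
    unfold phi
    rw [dif_pos h, dif_pos hK]
    set li := Nat.find h with hli
    set lK := Nat.find hK with hlK
    have hlKli : lK ≤ li := Nat.find_le (wordBall_subset _ _ (Sgen_mono enum hiK) _
      (Nat.find_spec h))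
    have hL : N ≤ n + lK := by
      by_contra hcon
      push_neg at hcon
      apply hgood
      constructor
      · omega
      · exact wordBall_mono _ (by omega) (Nat.find_spec hK)
    have hq0 : 0 < rr i / rr K := div_pos (rr_pos i) (rr_pos K)
    have hq1 : rr i / rr K ≤ 1 := by
      rw [div_le_one (rr_pos K)]
      exact rr_mono hiK
    calc rr i ^ n * rr i ^ li = rr i ^ (n + li) := (pow_add _ _ _).symm
      _ ≤ rr i ^ (n + lK) :=
          pow_le_pow_of_le_one (rr_pos i).le (rr_lt_one i).le (by omega)
      _ = (rr i / rr K)^(n + lK) * rr K ^ (n + lK) := by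
          rw [div_pow, div_mul_cancel₀]
          exact (pow_pos (rr_pos K) _).ne'
      _ ≤ (rr i / rr K)^N * rr K ^ (n + lK) := by
          apply mul_le_mul_of_nonneg_right _ (pow_pos (rr_pos K) _).le
          exact pow_le_pow_of_le_one hq0.le hq1 hL
      _ = (rr i / rr K)^N * (rr K ^ n * rr K ^ lK) := by rw [pow_add]
  · unfold phi
    rw [dif_neg h]
    have : rr i ^ n * 0 = 0 := mul_zero _
    rw [this]
    apply mul_nonneg (pow_nonneg (div_nonneg (rr_pos i).le (rr_pos K).le) N)
    exact mul_nonneg (pow_pos (rr_pos K) n).le (phi_nonneg enum K g)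

/-- `phi` is summable, by subexponential growth. -/
lemma summable_phi (enum : ℕ → G)
    (hA : ∀ S : Finset G, (∀ s ∈ S, s⁻¹ ∈ S) →
      Filter.Tendsto (fun n : ℕ => (Nat.card (wordBall S n) : ℝ) ^ (1 / (n : ℝ)))
        Filter.atTop (nhds 1)) (i : ℕ) :
    Summable (phi enum i) := by
  set S := Sgen enum i with hS
  have hsym : ∀ s ∈ S, s⁻¹ ∈ S := fun s hs => Sgen_symm enum i hs
  have hgeo := summable_card_mul_pow S (hA S hsym) (rr_pos i) (rr_lt_one i)
  set C := ∑' n : ℕ, (Nat.card (wordBall S n) : ℝ) * rr i ^ n with hC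
  apply summable_of_sum_le (fun g => phi_nonneg enum i g)
  intro u
  classical
  -- restrict to the support
  set u' := u.filter (fun g => HP enum i g) with hu'
  have hsub : ∑ g ∈ u, phi enum i g = ∑ g ∈ u', phi enum i g := by
    rw [hu']
    rw [Finset.sum_filter]
    apply Finset.sum_congr rfl
    intro g _
    by_cases h : HP enum i g
    · rw [if_pos h]
    · rw [if_neg h]
      unfold phi
      rw [dif_neg h]
  rw [hsub]
  -- length function on u'
  set len : G → ℕ := fun g => if h : HP enum i g then Nat.find h else 0 with hlen
  set M := u'.sup len with hM
  have hmap : ∀ g ∈ u', len g ∈ Finset.range (M+1) := by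
    intro g hg
    simp only [Finset.mem_range]
    exact Nat.lt_succ_of_le (Finset.le_sup hg)
  have hfib := Finset.sum_fiberwise_of_maps_to hmap (phi enum i)
  rw [← hfib]
  have hbound : ∀ n ∈ Finset.range (M+1),
      ∑ g ∈ u'.filter (fun g => len g = n), phi enum i g
        ≤ (Nat.card (wordBall S n) : ℝ) * rr i ^ n := by
    intro n _
    have hval : ∀ g ∈ u'.filter (fun g => len g = n), phi enum i g = rr i ^ n := by
      intro g hg
      simp only [Finset.mem_filter, hu'] at hg
      obtain ⟨⟨-, hHP⟩, hlg⟩ := hg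
      unfold phi
      rw [dif_pos hHP]
      rw [hlen] at hlg
      simp only [dif_pos hHP] at hlg
      rw [hlg]
    rw [Finset.sum_congr rfl hval, Finset.sum_const]
    have hsubF : u'.filter (fun g => len g = n) ⊆ (wordBall_finite S n).toFinset := by
      intro g hg
      simp only [Finset.mem_filter, hu'] at hg
      obtain ⟨⟨-, hHP⟩, hlg⟩ := hg
      rw [Set.Finite.mem_toFinset]
      rw [hlen] at hlg
      simp only [dif_pos hHP] at hlg
      have := Nat.find_spec hHP
      rwa [hlg] at this
    have hcard := Finset.card_le_card hsubF
    rw [nsmul_eq_mul]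
    apply mul_le_mul_of_nonneg_right _ (pow_nonneg (rr_pos i).le n)
    rw [natCard_wordBall]
    exact_mod_cast hcard
  calc ∑ n ∈ Finset.range (M+1), ∑ g ∈ u'.filter (fun g => len g = n), phi enum i g
      ≤ ∑ n ∈ Finset.range (M+1), (Nat.card (wordBall S n) : ℝ) * rr i ^ n :=
        Finset.sum_le_sum hbound
    _ ≤ C := Summable.sum_le_tsum _ (fun n _ => mul_nonneg (Nat.cast_nonneg _) (pow_nonneg (rr_pos i).le n)) hgeo

end ML1
namespace ML1
open scoped Classical
open Filter

variable {G : Type} [Group G]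

noncomputable def FF (enum : ℕ → G) (i : ℕ) (p : ℕ × G) : ℝ :=
  rr i ^ p.1 * phi enum i p.2

lemma FF_nonneg (enum : ℕ → G) (i : ℕ) (p : ℕ × G) : 0 ≤ FF enum i p :=
  mul_nonneg (pow_pos (rr_pos i) _).le (phi_nonneg enum i p.2)

lemma summable_FF (enum : ℕ → G) (i : ℕ) (h : Summable (phi enum i)) :
    Summable (FF enum i) :=
  Summable.mul_of_nonneg (summable_geometric_of_lt_one (rr_pos i).le (rr_lt_one i)) h
    (fun n => (pow_pos (rr_pos i) n).le) (fun g => phi_nonneg enum i g)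

noncomputable def AA (enum : ℕ → G) (i : ℕ) : ℝ := ∑' p : ℕ × G, FF enum i p

lemma AA_pos (enum : ℕ → G) (i : ℕ) (h : Summable (phi enum i)) : 0 < AA enum i := by
  have h1 : 0 < FF enum i (0, 1) := by
    unfold FF
    simp only [pow_zero, one_mul]
    exact phi_pos enum i (HP_one enum i)
  exact lt_of_lt_of_le h1 (Summable.le_tsum (summable_FF enum i h) (0,1)
    (fun j _ => FF_nonneg enum i j))

noncomputable def ww (enum : ℕ → G) (i : ℕ) : ℝ := (2:ℝ)⁻¹ ^ i / AA enum i

lemma ww_pos (enum : ℕ → G) (i : ℕ) (h : Summable (phi enum i)) : 0 < ww enum i :=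
  div_pos (pow_pos (by norm_num) i) (AA_pos enum i h)

variable {X : Type} [MulAction G X]

noncomputable def sliceTerm (enum : ℕ → G) (ρ : ℕ → X) (i : ℕ) (x : X) (p : ℕ × G) : ℝ :=
  if p.2 • ρ p.1 = x then ww enum i * FF enum i p else 0

lemma sliceTerm_nonneg (enum : ℕ → G) (ρ : ℕ → X) (i : ℕ) (x : X)
    (h : Summable (phi enum i)) (p : ℕ × G) : 0 ≤ sliceTerm enum ρ i x p := by
  unfold sliceTerm
  split
  · exact mul_nonneg (ww_pos enum i h).le (FF_nonneg enum i p)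
  · exact le_refl 0

lemma sliceTerm_le (enum : ℕ → G) (ρ : ℕ → X) (i : ℕ) (x : X) (p : ℕ × G) :
    sliceTerm enum ρ i x p ≤ ww enum i * FF enum i p ∨
      sliceTerm enum ρ i x p = 0 := by
  unfold sliceTerm
  split
  · exact Or.inl (le_refl _)
  · exact Or.inr rfl

lemma summable_sliceTerm (enum : ℕ → G) (ρ : ℕ → X) (i : ℕ) (x : X)
    (h : Summable (phi enum i)) : Summable (sliceTerm enum ρ i x) := by
  apply Summable.of_nonneg_of_le (sliceTerm_nonneg enum ρ i x h)
    (fun p => ?_) ((summable_FF enum i h).mul_left (ww enum i))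
  unfold sliceTerm
  split
  · exact le_refl _
  · exact mul_nonneg (ww_pos enum i h).le (FF_nonneg enum i p)

noncomputable def slice (enum : ℕ → G) (ρ : ℕ → X) (i : ℕ) (x : X) : ℝ :=
  ∑' p : ℕ × G, sliceTerm enum ρ i x p

lemma slice_nonneg (enum : ℕ → G) (ρ : ℕ → X) (i : ℕ) (x : X)
    (h : Summable (phi enum i)) : 0 ≤ slice enum ρ i x :=
  tsum_nonneg (sliceTerm_nonneg enum ρ i x h)

lemma slice_le (enum : ℕ → G) (ρ : ℕ → X) (i : ℕ) (x : X)
    (h : Summable (phi enum i)) : slice enum ρ i x ≤ (2:ℝ)⁻¹ ^ i := by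
  have h1 : slice enum ρ i x ≤ ∑' p : ℕ × G, ww enum i * FF enum i p := by
    apply Summable.tsum_le_tsum _ (summable_sliceTerm enum ρ i x h)
      ((summable_FF enum i h).mul_left (ww enum i))
    intro p
    rcases sliceTerm_le enum ρ i x p with h2 | h2
    · exact h2
    · rw [h2]
      exact mul_nonneg (ww_pos enum i h).le (FF_nonneg enum i p)
  calc slice enum ρ i x ≤ ∑' p : ℕ × G, ww enum i * FF enum i p := h1
    _ = ww enum i * AA enum i := tsum_mul_left
    _ = (2:ℝ)⁻¹ ^ i := by
        unfold ww
        exact div_mul_cancel₀ _ (AA_pos enum i h).ne'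

lemma summable_slice (enum : ℕ → G) (ρ : ℕ → X) (x : X)
    (h : ∀ i, Summable (phi enum i)) : Summable (fun i => slice enum ρ i x) := by
  apply Summable.of_nonneg_of_le (fun i => slice_nonneg enum ρ i x (h i))
    (fun i => slice_le enum ρ i x (h i))
  exact summable_geometric_of_lt_one (by norm_num) (by norm_num)

lemma slice_pos (enum : ℕ → G) (ρ : ℕ → X) (i : ℕ) (x : X)
    (h : Summable (phi enum i)) (hρ : Function.Surjective ρ) :
    0 < slice enum ρ i x := by
  obtain ⟨n₀, hn₀⟩ := hρ x
  have h1 : 0 < sliceTerm enum ρ i x (n₀, 1) := by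
    unfold sliceTerm
    rw [if_pos (by simpa using hn₀)]
    exact mul_pos (ww_pos enum i h)
      (mul_pos (pow_pos (rr_pos i) _) (phi_pos enum i (HP_one enum i)))
  exact lt_of_lt_of_le h1 (Summable.le_tsum (summable_sliceTerm enum ρ i x h) (n₀, 1)
    (fun j _ => sliceTerm_nonneg enum ρ i x h j))

noncomputable def nufun (enum : ℕ → G) (ρ : ℕ → X) (x : X) : ℝ :=
  ∑' i : ℕ, slice enum ρ i x

lemma nufun_pos (enum : ℕ → G) (ρ : ℕ → X) (x : X)
    (h : ∀ i, Summable (phi enum i)) (hρ : Function.Surjective ρ) :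
    0 < nufun enum ρ x :=
  lt_of_lt_of_le (slice_pos enum ρ 0 x (h 0) hρ)
    (Summable.le_tsum (summable_slice enum ρ x h) 0 (fun j _ => slice_nonneg enum ρ j x (h j)))

lemma summable_nufun (enum : ℕ → G) (ρ : ℕ → X)
    (h : ∀ i, Summable (phi enum i)) : Summable (nufun enum ρ : X → ℝ) := by
  apply summable_of_sum_le (c := (2:ℝ)⁻¹⁻¹)
  · intro x
    exact tsum_nonneg (fun i => slice_nonneg enum ρ i x (h i))
  · intro u
    have h1 : ∑ x ∈ u, nufun enum ρ x = ∑' i : ℕ, ∑ x ∈ u, slice enum ρ i x := by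
      unfold nufun
      rw [Summable.tsum_finsetSum (fun x _ => summable_slice enum ρ x h)]
    rw [h1]
    have h2 : ∀ i : ℕ, ∑ x ∈ u, slice enum ρ i x ≤ (2:ℝ)⁻¹ ^ i := by
      intro i
      have h3 : ∑ x ∈ u, slice enum ρ i x
          = ∑' p : ℕ × G, ∑ x ∈ u, sliceTerm enum ρ i x p := by
        unfold slice
        rw [Summable.tsum_finsetSum (fun x _ => summable_sliceTerm enum ρ i x (h i))]
      rw [h3]
      have h4 : ∀ p : ℕ × G, ∑ x ∈ u, sliceTerm enum ρ i x p
          ≤ ww enum i * FF enum i p := by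
        intro p
        unfold sliceTerm
        rw [Finset.sum_ite_eq u (p.2 • ρ p.1) (fun _ => ww enum i * FF enum i p)]
        split
        · exact le_refl _
        · exact mul_nonneg (ww_pos enum i (h i)).le (FF_nonneg enum i p)
      calc ∑' p : ℕ × G, ∑ x ∈ u, sliceTerm enum ρ i x p
          ≤ ∑' p : ℕ × G, ww enum i * FF enum i p := by
            apply Summable.tsum_le_tsum h4 _ ((summable_FF enum i (h i)).mul_left (ww enum i))
            apply Summable.of_nonneg_of_le
              (fun p => Finset.sum_nonneg fun x _ => sliceTerm_nonneg enum ρ i x (h i) p)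
              h4 ((summable_FF enum i (h i)).mul_left (ww enum i))
        _ = ww enum i * AA enum i := tsum_mul_left
        _ = (2:ℝ)⁻¹ ^ i := by
            unfold ww
            exact div_mul_cancel₀ _ (AA_pos enum i (h i)).ne'
    have h5 : Summable (fun i : ℕ => ∑ x ∈ u, slice enum ρ i x) := by
      apply Summable.of_nonneg_of_le
        (fun i => Finset.sum_nonneg fun x _ => slice_nonneg enum ρ i x (h i))
        h2
      exact summable_geometric_of_lt_one (by norm_num) (by norm_num)
    calc ∑' i : ℕ, ∑ x ∈ u, slice enum ρ i x
        ≤ ∑' i : ℕ, (2:ℝ)⁻¹ ^ i := by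
          apply Summable.tsum_le_tsum h2 h5
          exact summable_geometric_of_lt_one (by norm_num) (by norm_num)
      _ = (1 - (2:ℝ)⁻¹)⁻¹ := tsum_geometric_of_lt_one (by norm_num) (by norm_num)
      _ ≤ (2:ℝ)⁻¹⁻¹ := by norm_num

end ML1
namespace ML1
open scoped Classical
open Filter

variable {G : Type} [Group G] {X : Type} [MulAction G X]

set_option maxHeartbeats 1000000 in
lemma slice_smul_ge (enum : ℕ → G) (ρ : ℕ → X) (i : ℕ) {s : G} (hs : s ∈ Sgen enum i)
    (h : Summable (phi enum i)) (x : X) :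
    rr i * slice enum ρ i x ≤ slice enum ρ i (s • x) := by
  set e : ℕ × G ≃ ℕ × G := (Equiv.refl ℕ).prodCongr (Equiv.mulLeft s) with he
  have hterm : ∀ p : ℕ × G, rr i * sliceTerm enum ρ i x p
      ≤ sliceTerm enum ρ i (s • x) (e p) := by
    rintro ⟨n, g⟩
    have hep : e (n, g) = (n, s * g) := by
      rw [he]
      rfl
    rw [hep]
    unfold sliceTerm
    simp only
    by_cases hc : g • ρ n = x
    · rw [if_pos hc, if_pos (by rw [mul_smul, hc])]
      unfold FF
      simp only
      calc rr i * (ww enum i * (rr i ^ n * phi enum i g))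
          = ww enum i * (rr i ^ n * (rr i * phi enum i g)) := by ring
        _ ≤ ww enum i * (rr i ^ n * phi enum i (s * g)) := by
            apply mul_le_mul_of_nonneg_left _ (ww_pos enum i h).le
            exact mul_le_mul_of_nonneg_left (phi_mul_ge enum i hs g)
              (pow_pos (rr_pos i) _).le
    · rw [if_neg hc, if_neg ?_]
      · rw [mul_zero]
      · rw [mul_smul, smul_left_cancel_iff]
        exact hc
  have hsum1 : Summable (fun p => rr i * sliceTerm enum ρ i x p) :=
    (summable_sliceTerm enum ρ i x h).mul_left _
  have hsum2 : Summable (fun p => sliceTerm enum ρ i (s • x) (e p)) :=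
    (Equiv.summable_iff e).2 (summable_sliceTerm enum ρ i (s • x) h)
  calc rr i * slice enum ρ i x = ∑' p : ℕ × G, rr i * sliceTerm enum ρ i x p :=
        tsum_mul_left.symm
    _ ≤ ∑' p : ℕ × G, sliceTerm enum ρ i (s • x) (e p) :=
        Summable.tsum_le_tsum hterm hsum1 hsum2
    _ = slice enum ρ i (s • x) := Equiv.tsum_eq e _

lemma slice_smul_le (enum : ℕ → G) (ρ : ℕ → X) (i : ℕ) {s : G} (hs : s ∈ Sgen enum i)
    (h : Summable (phi enum i)) (x : X) :
    slice enum ρ i (s • x) ≤ (rr i)⁻¹ * slice enum ρ i x := by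
  have h1 := slice_smul_ge enum ρ i (Sgen_symm enum i hs) h (s • x)
  rw [inv_smul_smul] at h1
  calc slice enum ρ i (s • x) = (rr i)⁻¹ * (rr i * slice enum ρ i (s • x)) := by
        rw [← mul_assoc, inv_mul_cancel₀ (rr_pos i).ne', one_mul]
    _ ≤ (rr i)⁻¹ * slice enum ρ i x :=
        mul_le_mul_of_nonneg_left h1 (inv_pos.2 (rr_pos i)).le

def badSet (enum : ℕ → G) (ρ : ℕ → X) (K N : ℕ) : Set X :=
  (fun p : ℕ × G => p.2 • ρ p.1) '' {p : ℕ × G | p.1 < N ∧ p.2 ∈ wordBall (Sgen enum K) N}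

lemma badSet_finite (enum : ℕ → G) (ρ : ℕ → X) (K N : ℕ) :
    (badSet enum ρ K N).Finite := by
  apply Set.Finite.image
  apply Set.Finite.subset ((Set.finite_Iio N).prod (wordBall_finite (Sgen enum K) N))
  rintro ⟨n, g⟩ ⟨h1, h2⟩
  exact ⟨h1, h2⟩

lemma slice_head_le (enum : ℕ → G) (ρ : ℕ → X) {i K : ℕ} (hiK : i ≤ K)
    (hi : Summable (phi enum i)) (hK : Summable (phi enum K)) {N : ℕ} {x : X}
    (hx : x ∉ badSet enum ρ K N) :
    slice enum ρ i x
      ≤ (ww enum i / ww enum K) * (rr i / rr K)^N * slice enum ρ K x := by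
  unfold slice
  rw [← tsum_mul_left]
  apply Summable.tsum_le_tsum _ (summable_sliceTerm enum ρ i x hi)
    ((summable_sliceTerm enum ρ K x hK).mul_left _)
  intro p
  unfold sliceTerm
  by_cases hc : p.2 • ρ p.1 = x
  · rw [if_pos hc, if_pos hc]
    have hgood : ¬(p.1 < N ∧ p.2 ∈ wordBall (Sgen enum K) N) := by
      intro hcon
      exact hx ⟨p, hcon, hc⟩
    have hple := phi_head_le enum hiK (g := p.2) (n := p.1) hgood
    have hrw : (ww enum i / ww enum K) * (rr i / rr K)^N * (ww enum K * FF enum K p)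
        = ww enum i * ((rr i / rr K)^N * (rr K ^ p.1 * phi enum K p.2)) := by
      unfold FF
      field_simp [(ww_pos enum K hK).ne', (rr_pos K).ne']
    rw [hrw]
    apply mul_le_mul_of_nonneg_left _ (ww_pos enum i hi).le
    exact hple
  · rw [if_neg hc, if_neg hc, mul_zero]

end ML1
namespace ML1
open scoped Classical
open Filter

variable {G : Type} [Group G]

set_option maxHeartbeats 2000000 in
lemma C_of_A [Countable G]
    (hA : ∀ S : Finset G, (∀ s ∈ S, s⁻¹ ∈ S) →
      Tendsto (fun n : ℕ => (Nat.card (wordBall S n) : ℝ) ^ (1 / (n : ℝ)))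
        atTop (nhds 1)) :
    ∀ (X : Type) [MulAction G X] [Countable X], ∃ ν : X → ℝ, IsModerateL1 G X ν := by
  intro X _ _
  rcases isEmpty_or_nonempty X with hX | hX
  · refine ⟨fun _ => 1, Summable.of_finite, fun x => (IsEmpty.false x).elim, fun g => ?_⟩
    rw [Filter.cofinite_eq_bot]
    exact tendsto_bot
  · obtain ⟨enum, henum⟩ := exists_surjective_nat G
    obtain ⟨ρ, hρ⟩ := exists_surjective_nat X
    have hphi : ∀ i, Summable (phi enum i) := summable_phi enum hA
    refine ⟨nufun enum ρ, summable_nufun enum ρ hphi,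
      fun x => nufun_pos enum ρ x hphi hρ, ?_⟩
    intro g
    rw [Metric.tendsto_nhds]
    intro ε hε
    set δ := min (ε/5) (1/2) with hδdef
    have hδ0 : 0 < δ := lt_min (by linarith) (by norm_num)
    have hδhalf : δ ≤ 1/2 := min_le_right _ _
    have hδε : δ ≤ ε/5 := min_le_left _ _
    have h1δ : 0 < 1 - δ := by linarith
    obtain ⟨j, hj⟩ := henum g
    obtain ⟨K₀, hK₀⟩ := exists_rr_ge hδ0
    set K := max j K₀ with hKdef
    have hrK : ∀ i, K ≤ i → 1 - δ ≤ rr i :=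
      fun i hi => hK₀ i (le_trans (le_max_right _ _) hi)
    have hgS : ∀ i, K ≤ i → g ∈ Sgen enum i :=
      fun i hi => hj ▸ enum_mem_Sgen enum (le_trans (le_max_left _ _) hi)
    set T : X → ℝ := fun x => ∑' i : ℕ, slice enum ρ (i + K) x with hT
    set Hd : X → ℝ := fun x => ∑ i ∈ Finset.range K, slice enum ρ i x with hHd
    have hsummT : ∀ x : X, Summable (fun i => slice enum ρ (i + K) x) :=
      fun x => (summable_nat_add_iff K).2 (summable_slice enum ρ x hphi)
    have hsplit : ∀ x : X, nufun enum ρ x = Hd x + T x :=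
      fun x => ((summable_slice enum ρ x hphi).sum_add_tsum_nat_add K).symm
    have hTnonneg : ∀ x : X, 0 ≤ T x :=
      fun x => tsum_nonneg (fun i => slice_nonneg enum ρ (i + K) x (hphi _))
    have hHdnonneg : ∀ x : X, 0 ≤ Hd x :=
      fun x => Finset.sum_nonneg (fun i _ => slice_nonneg enum ρ i x (hphi _))
    have hTle : ∀ x : X, T x ≤ nufun enum ρ x := by
      intro x
      rw [hsplit x]
      linarith [hHdnonneg x]
    -- tail transfer estimates
    have hTlow : ∀ x : X, (1 - δ) * T x ≤ T (g • x) := by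
      intro x
      have hterm : ∀ i : ℕ, (1 - δ) * slice enum ρ (i + K) x
          ≤ slice enum ρ (i + K) (g • x) := by
        intro i
        calc (1 - δ) * slice enum ρ (i + K) x
            ≤ rr (i + K) * slice enum ρ (i + K) x :=
              mul_le_mul_of_nonneg_right (hrK (i + K) (Nat.le_add_left K i))
                (slice_nonneg enum ρ (i + K) x (hphi _))
          _ ≤ slice enum ρ (i + K) (g • x) :=
              slice_smul_ge enum ρ (i + K) (hgS (i + K) (Nat.le_add_left K i))
                (hphi _) x
      calc (1 - δ) * T x = ∑' i : ℕ, (1 - δ) * slice enum ρ (i + K) x :=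
            tsum_mul_left.symm
        _ ≤ T (g • x) :=
            Summable.tsum_le_tsum hterm ((hsummT x).mul_left _) (hsummT (g • x))
    have hTup : ∀ x : X, T (g • x) ≤ (1 - δ)⁻¹ * T x := by
      intro x
      have hterm : ∀ i : ℕ, slice enum ρ (i + K) (g • x)
          ≤ (1 - δ)⁻¹ * slice enum ρ (i + K) x := by
        intro i
        calc slice enum ρ (i + K) (g • x)
            ≤ (rr (i + K))⁻¹ * slice enum ρ (i + K) x :=
              slice_smul_le enum ρ (i + K) (hgS (i + K) (Nat.le_add_left K i))
                (hphi _) x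
          _ ≤ (1 - δ)⁻¹ * slice enum ρ (i + K) x := by
              apply mul_le_mul_of_nonneg_right _
                (slice_nonneg enum ρ (i + K) x (hphi _))
              exact inv_anti₀ h1δ (hrK (i + K) (Nat.le_add_left K i))
      calc T (g • x) ≤ ∑' i : ℕ, (1 - δ)⁻¹ * slice enum ρ (i + K) x :=
            Summable.tsum_le_tsum hterm (hsummT (g • x)) ((hsummT x).mul_left _)
        _ = (1 - δ)⁻¹ * T x := tsum_mul_left
    -- head smallness
    have hslicehead : ∀ i, i < K → ∀ᶠ x in (cofinite : Filter X),
        slice enum ρ i x ≤ (δ / K) * slice enum ρ K x := by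
      intro i hiK
      set C := ww enum i / ww enum K with hC
      have hC0 : 0 < C := div_pos (ww_pos _ _ (hphi i)) (ww_pos _ _ (hphi K))
      have hq0 : (0:ℝ) ≤ rr i / rr K := (div_pos (rr_pos i) (rr_pos K)).le
      have hq1 : rr i / rr K < 1 := (div_lt_one (rr_pos K)).2 (rr_lt hiK)
      have hKpos : (0:ℝ) < K := by
        have : 0 < K := lt_of_le_of_lt (Nat.zero_le i) hiK
        exact_mod_cast this
      have hlim : Tendsto (fun N : ℕ => C * (rr i / rr K)^N) atTop (nhds 0) := by
        have := (tendsto_pow_atTop_nhds_zero_of_lt_one hq0 hq1).const_mul C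
        simpa using this
      obtain ⟨N, hN⟩ := eventually_atTop.1
        (hlim.eventually_lt_const (div_pos hδ0 hKpos))
      rw [eventually_cofinite]
      apply Set.Finite.subset (badSet_finite enum ρ K N)
      intro x hx
      by_contra hxbad
      apply hx
      calc slice enum ρ i x ≤ C * (rr i / rr K)^N * slice enum ρ K x :=
            slice_head_le enum ρ hiK.le (hphi i) (hphi K) hxbad
        _ ≤ (δ / K) * slice enum ρ K x :=
            mul_le_mul_of_nonneg_right (hN N (le_refl N)).le
              (slice_nonneg enum ρ K x (hphi K))
    have hhead : ∀ᶠ x in (cofinite : Filter X), Hd x ≤ δ * T x := by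
      have hall : ∀ᶠ x in (cofinite : Filter X), ∀ i ∈ Finset.range K,
          slice enum ρ i x ≤ (δ / K) * slice enum ρ K x :=
        (eventually_all_finset (Finset.range K)).2
          (fun i hi => hslicehead i (Finset.mem_range.1 hi))
      filter_upwards [hall] with x hx
      have hsK : slice enum ρ K x ≤ T x := by
        have h0 := Summable.le_tsum (hsummT x) 0
          (fun j _ => slice_nonneg enum ρ (j + K) x (hphi _))
        simpa using h0
      rcases Nat.eq_zero_or_pos K with hK0 | hK0
      · rw [hHd]
        simp only [hK0, Finset.range_zero, Finset.sum_empty]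
        exact mul_nonneg hδ0.le (hTnonneg x)
      · have hKpos : (0:ℝ) < K := by exact_mod_cast hK0
        calc Hd x ≤ ∑ i ∈ Finset.range K, (δ / K) * slice enum ρ K x :=
              Finset.sum_le_sum hx
          _ = (K : ℝ) * ((δ / K) * slice enum ρ K x) := by
              rw [Finset.sum_const, Finset.card_range, nsmul_eq_mul]
          _ = δ * slice enum ρ K x := by
              field_simp
          _ ≤ δ * T x := mul_le_mul_of_nonneg_left hsK hδ0.le
    have hheadg : ∀ᶠ x in (cofinite : Filter X), Hd (g • x) ≤ δ * T (g • x) :=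
      ((MulAction.injective g).tendsto_cofinite).eventually hhead
    filter_upwards [hhead, hheadg] with x h1 h2
    have hνx : nufun enum ρ x = Hd x + T x := hsplit x
    have hνgx : nufun enum ρ (g • x) = Hd (g • x) + T (g • x) := hsplit (g • x)
    have hνx0 : 0 < nufun enum ρ x := nufun_pos enum ρ x hphi hρ
    have hTlow' := hTlow x
    have hTup' := hTup x
    have hTgx0 : 0 ≤ T (g • x) := hTnonneg (g • x)
    have hTx0 : 0 ≤ T x := hTnonneg x
    -- upper bound
    have hup : nufun enum ρ (g • x) ≤ (1 + δ) * ((1 - δ)⁻¹ * T x) := by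
      rw [hνgx]
      calc Hd (g • x) + T (g • x) ≤ δ * T (g • x) + T (g • x) := by linarith
        _ = (1 + δ) * T (g • x) := by ring
        _ ≤ (1 + δ) * ((1 - δ)⁻¹ * T x) :=
            mul_le_mul_of_nonneg_left hTup' (by linarith)
    have hTνx : (1 - δ) * nufun enum ρ x ≤ T x := by
      rw [hνx]
      nlinarith [h1, hδ0.le, hδhalf, hTnonneg x, hHdnonneg x]
    -- lower bound
    have hlow : (1 - δ) * ((1 - δ) * nufun enum ρ x) ≤ nufun enum ρ (g • x) := by
      rw [hνgx]
      calc (1 - δ) * ((1 - δ) * nufun enum ρ x)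
          ≤ (1 - δ) * T x := mul_le_mul_of_nonneg_left hTνx (by linarith)
        _ ≤ T (g • x) := hTlow'
        _ ≤ Hd (g • x) + T (g • x) := by linarith [hHdnonneg (g • x)]
    -- conclude
    have hup2 : nufun enum ρ (g • x) ≤ (1 + 4*δ) * nufun enum ρ x := by
      have key1 : (1 + δ) * (1 - δ)⁻¹ ≤ 1 + 4*δ := by
        rw [mul_comm, inv_mul_le_iff₀ h1δ]
        nlinarith
      have hTxν : T x ≤ nufun enum ρ x := hTle x
      calc nufun enum ρ (g • x) ≤ (1 + δ) * ((1 - δ)⁻¹ * T x) := hup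
        _ = ((1 + δ) * (1 - δ)⁻¹) * T x := by ring
        _ ≤ (1 + 4*δ) * T x := by
            apply mul_le_mul_of_nonneg_right key1 hTx0
        _ ≤ (1 + 4*δ) * nufun enum ρ x :=
            mul_le_mul_of_nonneg_left hTxν (by linarith)
    have hlow2 : (1 - 2*δ) * nufun enum ρ x ≤ nufun enum ρ (g • x) := by
      have key2 : (1 - 2*δ) ≤ (1 - δ) * (1 - δ) := by nlinarith
      calc (1 - 2*δ) * nufun enum ρ x ≤ ((1 - δ) * (1 - δ)) * nufun enum ρ x :=
            mul_le_mul_of_nonneg_right key2 hνx0.le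
        _ = (1 - δ) * ((1 - δ) * nufun enum ρ x) := by ring
        _ ≤ nufun enum ρ (g • x) := hlow
    rw [Real.dist_eq, abs_sub_lt_iff]
    have hratio_up : nufun enum ρ (g • x) / nufun enum ρ x ≤ 1 + 4*δ :=
      (div_le_iff₀ hνx0).2 hup2
    have hratio_low : 1 - 2*δ ≤ nufun enum ρ (g • x) / nufun enum ρ x :=
      (le_div_iff₀ hνx0).2 hlow2
    constructor
    · have h4δ : 4*δ < ε := by linarith
      linarith
    · have h2δ : 2*δ < ε := by linarith
      linarith

end ML1

theorem moderate_l1_tfae (G : Type) [Group G] [Countable G] :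
    ((∀ S : Finset G, (∀ s ∈ S, s⁻¹ ∈ S) →
        Tendsto (fun n : ℕ => (Nat.card (wordBall S n) : ℝ) ^ (1 / (n : ℝ))) atTop (nhds 1)) ↔
      ∃ ν : G → ℝ, IsModerateL1 G G ν) ∧
    ((∃ ν : G → ℝ, IsModerateL1 G G ν) ↔
      ∀ (X : Type) [MulAction G X] [Countable X], ∃ ν : X → ℝ, IsModerateL1 G X ν) := by
  constructor
  · constructor
    · intro hA
      exact ML1.C_of_A hA G
    · intro hB S _hS
      exact A_of_B hB S
  · constructor
    · intro hB X _ _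
      exact ML1.C_of_A (fun S _ => A_of_B hB S) X
    · intro hC
      exact hC G
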